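/- arXiv:1810.03757 — 2 statements merged into one kernel-verified Lean document; each statement's English description precedes it below -/
import Mathlib

section
/- Let f ∈ Hol(α) be a bounded α-Hölder potential with distortion constant C_f, let d̄(x,y) = min{1, 4·C_f·d_X(x,y)^α} be the associated equivalent bounded metric on X, and for Borel probability measures μ₁, μ₂ on X let d(μ₁,μ₂) = sup{∫g dμ₁ − ∫g dμ₂ : g:X→ℝ with |g(x)−g(y)| ≤ d̄(x,y) for all x,y} be the corresponding Wasserstein distance. With P^m_n(φ) = L_f^m(φ·L_f^n 1)/L_f^{m+n} 1 and (P^m_n)^*μ the Borel probability measure determined by ∫φ d[(P^m_n)^*μ] = ∫ P^m_n(φ) dμ for bounded measurable φ, there exist m ∈ ℕ and t ∈ (0,1) such that for all n ∈ ℕ∪{0} and all Borel probability measures μ₁, μ₂ on X: d((P^m_n)^*μ₁, (P^m_n)^*μ₂) ≤ t·d(μ₁,μ₂). -/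
open MeasureTheory Filter Topology BoundedContinuousFunction

noncomputable section

variable {E : Type*} [MetricSpace E]

/-- The metric on the sequence space `X = E^ℕ`:
`d_X(x,y) = ∑_{n=1}^∞ 2⁻ⁿ · min(d_E(x_n,y_n), 1)`. -/
def dX (x y : ℕ → E) : ℝ :=
  ∑' n : ℕ, ((1 : ℝ) / 2) ^ (n + 1) * min (dist (x n) (y n)) 1

/-- The left shift `σ(x₁,x₂,x₃,…) = (x₂,x₃,…)`. -/
def shift (x : ℕ → E) : ℕ → E := fun n => x (n + 1)

theorem continuous_shift : Continuous (shift (E := E)) :=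
  continuous_pi fun n => continuous_apply (n + 1)

/-- Prepending one symbol: `ax = (a, x₁, x₂, …)`. -/
def cons (a : E) (x : ℕ → E) : ℕ → E := fun n => Nat.casesOn n a x

/-- Prepending a finite word `a = (a₁,…,a_n)`. -/
def prepend {n : ℕ} (a : Fin n → E) (x : ℕ → E) : ℕ → E :=
  fun k => if h : k < n then a ⟨k, h⟩ else x (k - n)

/-- Birkhoff sums `f_n = ∑_{k=0}^{n-1} f ∘ σᵏ`. -/
def birkhoff (f : (ℕ → E) → ℝ) (n : ℕ) (x : ℕ → E) : ℝ :=
  ∑ k ∈ Finset.range n, f (shift^[k] x)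

/-- Boundedness of a real-valued function on `X`. -/
def Bdd (g : (ℕ → E) → ℝ) : Prop := ∃ M : ℝ, ∀ x, |g x| ≤ M

/-- `g` is `α`-Hölder with constant `C` (w.r.t. the metric `dX`). -/
def HolderConst (α C : ℝ) (g : (ℕ → E) → ℝ) : Prop :=
  ∀ x y, |g x - g y| ≤ C * dX x y ^ α

/-- `g ∈ Hol(α)`: bounded, continuous and `α`-Hölder. -/
def MemHol (α : ℝ) (g : (ℕ → E) → ℝ) : Prop :=
  Continuous g ∧ Bdd g ∧ ∃ C : ℝ, HolderConst α C g

/-- `g ∈ C_b(X,ℝ)`: bounded and continuous. -/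
def MemCb (g : (ℕ → E) → ℝ) : Prop := Continuous g ∧ Bdd g

/-- The Hölder seminorm `D_α(g) = sup_{x ≠ y} |g x - g y| / d_X(x,y)^α`. -/
def Dalpha (α : ℝ) (g : (ℕ → E) → ℝ) : ℝ :=
  sSup {r : ℝ | ∃ x y : ℕ → E, x ≠ y ∧ r = |g x - g y| / dX x y ^ α}

/-- The supremum norm `‖g‖_∞`. -/
def supNorm (g : (ℕ → E) → ℝ) : ℝ := ⨆ x : ℕ → E, |g x|

/-- The Hölder norm `‖g‖_α = ‖g‖_∞ + D_α(g)`. -/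
def alphaNorm (α : ℝ) (g : (ℕ → E) → ℝ) : ℝ := supNorm g + Dalpha α g

variable [MeasurableSpace E] [BorelSpace E]

/-- The Ruelle transfer operator `L_f φ(x) = ∫_E e^{f(ax)} φ(ax) dp(a)`. -/
def ruelle (p : Measure E) (f φ : (ℕ → E) → ℝ) : (ℕ → E) → ℝ :=
  fun x => ∫ a, Real.exp (f (cons a x)) * φ (cons a x) ∂p

/-- The normalized operators `P^m_n(φ) = L_f^m(φ · L_f^n 1) / L_f^{m+n} 1`. -/
def Pmn (p : Measure E) (f : (ℕ → E) → ℝ) (m n : ℕ) (φ : (ℕ → E) → ℝ) : (ℕ → E) → ℝ :=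
  fun x => (ruelle p f)^[m] (fun y => φ y * (ruelle p f)^[n] (fun _ => 1) y) x /
    (ruelle p f)^[m + n] (fun _ => 1) x

/-- The equivalent bounded metric `d̄(x,y) = min{1, 4 C_f d_X(x,y)^α}`. -/
def dbar (Cf α : ℝ) (x y : ℕ → E) : ℝ := min 1 (4 * Cf * dX x y ^ α)

/-- The Wasserstein distance associated to `d̄`, via Kantorovich duality. -/
def wass (Cf α : ℝ) (μ₁ μ₂ : Measure (ℕ → E)) : ℝ :=
  sSup {r : ℝ | ∃ g : (ℕ → E) → ℝ,
    (∀ x y, |g x - g y| ≤ dbar Cf α x y) ∧ r = (∫ x, g x ∂μ₁) - ∫ x, g x ∂μ₂}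

/-! ### Auxiliary lemmas -/

set_option linter.unusedSectionVars false

section AuxMetric

variable {E : Type*} [MetricSpace E]

lemma dX_term_nonneg (x y : ℕ → E) (n : ℕ) :
    0 ≤ ((1 : ℝ) / 2) ^ (n + 1) * min (dist (x n) (y n)) 1 :=
  mul_nonneg (by positivity) (le_min dist_nonneg zero_le_one)

lemma dX_term_le (x y : ℕ → E) (n : ℕ) :
    ((1 : ℝ) / 2) ^ (n + 1) * min (dist (x n) (y n)) 1 ≤ ((1 : ℝ) / 2) ^ (n + 1) :=
  mul_le_of_le_one_right (by positivity) (min_le_right _ _)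

lemma summable_half : Summable (fun n : ℕ => ((1 : ℝ) / 2) ^ (n + 1)) :=
  (summable_nat_add_iff 1).mpr (summable_geometric_of_lt_one (by norm_num) (by norm_num))

lemma tsum_half : ∑' n : ℕ, ((1 : ℝ) / 2) ^ (n + 1) = 1 := by
  simp only [pow_succ]
  rw [tsum_mul_right, tsum_geometric_of_lt_one (by norm_num) (by norm_num)]
  norm_num

lemma summable_dX (x y : ℕ → E) :
    Summable (fun n : ℕ => ((1 : ℝ) / 2) ^ (n + 1) * min (dist (x n) (y n)) 1) :=
  Summable.of_nonneg_of_le (dX_term_nonneg x y) (dX_term_le x y) summable_half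

lemma dX_nonneg (x y : ℕ → E) : 0 ≤ dX x y :=
  tsum_nonneg (dX_term_nonneg x y)

lemma dX_le_one (x y : ℕ → E) : dX x y ≤ 1 := by
  rw [← tsum_half]
  exact Summable.tsum_le_tsum (dX_term_le x y) (summable_dX x y) summable_half

lemma dX_symm (x y : ℕ → E) : dX x y = dX y x := by
  unfold dX; congr 1; funext n; rw [dist_comm]

lemma prepend_apply_lt {m : ℕ} (a : Fin m → E) (x : ℕ → E) {k : ℕ} (h : k < m) :
    prepend a x k = a ⟨k, h⟩ := dif_pos h

lemma prepend_apply_ge {m : ℕ} (a : Fin m → E) (x : ℕ → E) {k : ℕ} (h : ¬ k < m) :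
    prepend a x k = x (k - m) := dif_neg h

lemma dX_prepend {m : ℕ} (a : Fin m → E) (x y : ℕ → E) :
    dX (prepend a x) (prepend a y) = ((1 : ℝ) / 2) ^ m * dX x y := by
  unfold dX
  rw [← Summable.sum_add_tsum_nat_add m (summable_dX (prepend a x) (prepend a y))]
  have h1 : ∑ i ∈ Finset.range m,
      ((1 : ℝ) / 2) ^ (i + 1) * min (dist (prepend a x i) (prepend a y i)) 1 = 0 := by
    apply Finset.sum_eq_zero
    intro i hi
    have hi' : i < m := Finset.mem_range.mp hi
    rw [prepend_apply_lt a x hi', prepend_apply_lt a y hi', dist_self]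
    simp
  have h2 : ∀ i : ℕ, ((1 : ℝ) / 2) ^ (i + m + 1) * min (dist (prepend a x (i + m)) (prepend a y (i + m))) 1
      = ((1 : ℝ) / 2) ^ m * (((1 : ℝ) / 2) ^ (i + 1) * min (dist (x i) (y i)) 1) := by
    intro i
    have hge : ¬ i + m < m := by omega
    rw [prepend_apply_ge a x hge, prepend_apply_ge a y hge]
    have : i + m - m = i := by omega
    rw [this]; ring
  rw [h1, zero_add]
  calc ∑' i : ℕ, ((1 : ℝ) / 2) ^ (i + m + 1) * min (dist (prepend a x (i + m)) (prepend a y (i + m))) 1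
      = ∑' i : ℕ, ((1 : ℝ) / 2) ^ m * (((1 : ℝ) / 2) ^ (i + 1) * min (dist (x i) (y i)) 1) := by
        congr 1; funext i; exact h2 i
    _ = ((1 : ℝ) / 2) ^ m * dX x y := tsum_mul_left

lemma tendsto_dX (z : ℕ → E) : Filter.Tendsto (fun y => dX y z) (nhds z) (nhds 0) := by
  rw [Metric.tendsto_nhds]
  intro ε hε
  obtain ⟨N, hN⟩ := exists_pow_lt_of_lt_one (half_pos hε) (show (1 : ℝ) / 2 < 1 by norm_num)
  have hsplit : ∀ y : ℕ → E, dX y z ≤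
      (∑ n ∈ Finset.range N, ((1 : ℝ) / 2) ^ (n + 1) * min (dist (y n) (z n)) 1) + ((1 : ℝ) / 2) ^ N := by
    intro y
    rw [dX, ← Summable.sum_add_tsum_nat_add N (summable_dX y z)]
    gcongr
    calc ∑' n : ℕ, ((1 : ℝ) / 2) ^ (n + N + 1) * min (dist (y (n + N)) (z (n + N))) 1
        ≤ ∑' n : ℕ, ((1 : ℝ) / 2) ^ N * ((1 : ℝ) / 2) ^ (n + 1) := by
          apply Summable.tsum_le_tsum _ ((summable_dX y z).comp_injective (add_left_injective N)) (summable_half.mul_left _)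
          intro n
          calc ((1 : ℝ) / 2) ^ (n + N + 1) * min (dist (y (n + N)) (z (n + N))) 1
              ≤ ((1 : ℝ) / 2) ^ (n + N + 1) := dX_term_le y z (n + N)
            _ = ((1 : ℝ) / 2) ^ N * ((1 : ℝ) / 2) ^ (n + 1) := by ring
      _ = ((1 : ℝ) / 2) ^ N * 1 := by rw [tsum_mul_left, tsum_half]
      _ = ((1 : ℝ) / 2) ^ N := mul_one _
  have hcont : Filter.Tendsto
      (fun y : ℕ → E => ∑ n ∈ Finset.range N, ((1 : ℝ) / 2) ^ (n + 1) * min (dist (y n) (z n)) 1)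
      (nhds z) (nhds 0) := by
    have h0 : (0 : ℝ) = ∑ n ∈ Finset.range N, (0 : ℝ) := by simp
    rw [h0]
    apply tendsto_finset_sum
    intro n _
    have hc : Continuous fun y : ℕ → E => ((1 : ℝ) / 2) ^ (n + 1) * min (dist (y n) (z n)) 1 :=
      continuous_const.mul (((continuous_apply n).dist continuous_const).min continuous_const)
    have := hc.tendsto z
    simpa using this
  have hev : ∀ᶠ y in nhds z,
      (∑ n ∈ Finset.range N, ((1 : ℝ) / 2) ^ (n + 1) * min (dist (y n) (z n)) 1) < ε / 2 :=
    hcont.eventually_lt_const (half_pos hε)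
  filter_upwards [hev] with y hy
  rw [Real.dist_eq, sub_zero, abs_of_nonneg (dX_nonneg y z)]
  have := hsplit y
  linarith

lemma continuous_of_dbar_lip {Cf α : ℝ} (hα : 0 < α) {g : (ℕ → E) → ℝ}
    (hg : ∀ x y, |g x - g y| ≤ dbar Cf α x y) : Continuous g := by
  rw [continuous_iff_continuousAt]
  intro z
  rw [ContinuousAt, tendsto_iff_dist_tendsto_zero]
  apply squeeze_zero (fun y => dist_nonneg) (g := fun y => 4 * Cf * dX y z ^ α)
  · intro y
    calc dist (g y) (g z) = |g y - g z| := Real.dist_eq _ _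
      _ ≤ dbar Cf α y z := hg y z
      _ ≤ 4 * Cf * dX y z ^ α := min_le_right _ _
  · have h2 : Filter.Tendsto (fun s : ℝ => 4 * Cf * s ^ α) (nhds 0) (nhds 0) := by
      have hc : ContinuousAt (fun s : ℝ => s ^ α) 0 :=
        Real.continuousAt_rpow_const 0 α (Or.inr hα.le)
      have := (hc.tendsto).const_mul (4 * Cf)
      simpa [Real.zero_rpow (ne_of_gt hα)] using this
    exact h2.comp (tendsto_dX z)

end AuxMetric

section AuxAlgebra

variable {E : Type*} [MetricSpace E]

lemma prepend_zero_word (a : Fin 0 → E) (x : ℕ → E) : prepend a x = x := by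
  funext k
  rw [prepend_apply_ge a x (by omega)]
  congr 1

lemma shift_cons (b : E) (x : ℕ → E) : shift (cons b x) = x := rfl

lemma cons_prepend {m : ℕ} (b : E) (a : Fin m → E) (x : ℕ → E) :
    cons b (prepend a x) = prepend (Fin.cons b a) x := by
  funext k
  cases k with
  | zero =>
    rw [show cons b (prepend a x) 0 = b from rfl, prepend_apply_lt _ x (by omega)]
    rfl
  | succ k =>
    rw [show cons b (prepend a x) (k + 1) = prepend a x k from rfl]
    by_cases h : k < m
    · rw [prepend_apply_lt a x h, prepend_apply_lt _ x (by omega : k + 1 < m + 1)]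
      have he : (⟨k + 1, by omega⟩ : Fin (m + 1)) = Fin.succ ⟨k, h⟩ := rfl
      rw [he, Fin.cons_succ]
    · rw [prepend_apply_ge a x h, prepend_apply_ge _ x (by omega : ¬ k + 1 < m + 1)]
      congr 1
      omega

lemma shift_prepend {m : ℕ} (a : Fin (m + 1) → E) (x : ℕ → E) :
    shift (prepend a x) = prepend (Fin.tail a) x := by
  funext k
  show prepend a x (k + 1) = prepend (Fin.tail a) x k
  by_cases h : k < m
  · rw [prepend_apply_lt a x (by omega : k + 1 < m + 1), prepend_apply_lt _ x h]
    rfl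
  · rw [prepend_apply_ge a x (by omega : ¬ k + 1 < m + 1), prepend_apply_ge _ x h]
    congr 1
    omega

lemma shift_iterate_prepend {m : ℕ} (a : Fin m → E) (x : ℕ → E) :
    shift^[m] (prepend a x) = x := by
  induction m with
  | zero => simpa using prepend_zero_word a x
  | succ k ih =>
    rw [Function.iterate_succ_apply, shift_prepend, ih]

lemma prepend_append {n m : ℕ} (b : Fin n → E) (a : Fin m → E) (x : ℕ → E) :
    prepend (Fin.append b a) x = prepend b (prepend a x) := by
  funext k
  by_cases h1 : k < n
  · rw [prepend_apply_lt _ x (by omega : k < n + m), prepend_apply_lt b _ h1]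
    have : (⟨k, by omega⟩ : Fin (n + m)) = Fin.castAdd m ⟨k, h1⟩ := rfl
    rw [this, Fin.append_left]
  · by_cases h2 : k < n + m
    · rw [prepend_apply_lt _ x h2, prepend_apply_ge b _ h1,
        prepend_apply_lt a x (by omega : k - n < m)]
      have : (⟨k, h2⟩ : Fin (n + m)) = Fin.natAdd n ⟨k - n, by omega⟩ := by
        apply Fin.ext; simp; omega
      rw [this, Fin.append_right]
    · rw [prepend_apply_ge _ x h2, prepend_apply_ge b _ h1,
        prepend_apply_ge a x (by omega : ¬ k - n < m)]
      congr 1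
      omega

lemma birkhoff_split (f : (ℕ → E) → ℝ) (n m : ℕ) (z : ℕ → E) :
    birkhoff f (n + m) z = birkhoff f n z + birkhoff f m (shift^[n] z) := by
  unfold birkhoff
  rw [Finset.sum_range_add]
  congr 1
  apply Finset.sum_congr rfl
  intro k _
  congr 1
  rw [add_comm n k, Function.iterate_add_apply]

lemma birkhoff_one (f : (ℕ → E) → ℝ) (z : ℕ → E) : birkhoff f 1 z = f z := by
  simp [birkhoff]

lemma birkhoff_zero (f : (ℕ → E) → ℝ) (z : ℕ → E) : birkhoff f 0 z = 0 := by
  simp [birkhoff]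

lemma abs_birkhoff_le {f : (ℕ → E) → ℝ} {M : ℝ} (hM : ∀ z, |f z| ≤ M) (k : ℕ) (z : ℕ → E) :
    |birkhoff f k z| ≤ k * M := by
  calc |birkhoff f k z| ≤ ∑ i ∈ Finset.range k, |f (shift^[i] z)| :=
        Finset.abs_sum_le_sum_abs _ _
    _ ≤ ∑ i ∈ Finset.range k, M := Finset.sum_le_sum (fun i _ => hM _)
    _ = k * M := by simp [mul_comm]

lemma continuous_birkhoff {f : (ℕ → E) → ℝ} (hf : Continuous f) (k : ℕ) :
    Continuous (birkhoff f k) := by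
  unfold birkhoff
  apply continuous_finset_sum
  intro i _
  exact hf.comp (continuous_shift.iterate i)

end AuxAlgebra

section AuxMeasure

variable {E : Type*} [MetricSpace E] [MeasurableSpace E] [BorelSpace E]
  [SecondCountableTopology E]

lemma birkhoff_succ {f : (ℕ → E) → ℝ} (k : ℕ) (z : ℕ → E) :
    birkhoff f (k + 1) z = f z + birkhoff f k (shift z) := by
  have h := birkhoff_split f 1 k z
  rw [birkhoff_one, Function.iterate_one] at h
  rw [Nat.add_comm 1 k] at h
  exact h

lemma measurable_prepend_right {m : ℕ} (x : ℕ → E) :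
    Measurable (fun a : Fin m → E => prepend a x) := by
  apply measurable_pi_lambda
  intro k
  by_cases h : k < m
  · simp only [prepend, dif_pos h]
    exact measurable_pi_apply _
  · simp only [prepend, dif_neg h]
    exact measurable_const

lemma measurable_cons_pair :
    Measurable (fun q : E × (ℕ → E) => cons q.1 q.2) := by
  apply measurable_pi_lambda
  intro k
  cases k with
  | zero => exact measurable_fst
  | succ n => exact (measurable_pi_apply n).comp measurable_snd

lemma integrable_of_bdd' {α : Type*} [MeasurableSpace α] {μ : MeasureTheory.Measure α}
    [MeasureTheory.IsFiniteMeasure μ] {h : α → ℝ} (hm : Measurable h) {C : ℝ}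
    (hb : ∀ z, |h z| ≤ C) : MeasureTheory.Integrable h μ :=
  MeasureTheory.Integrable.mono' (MeasureTheory.integrable_const C) hm.aestronglyMeasurable
    (Filter.Eventually.of_forall (fun z => by simpa [Real.norm_eq_abs] using hb z))

variable {p : Measure E} [IsProbabilityMeasure p] {f : (ℕ → E) → ℝ}

lemma ruelle_measurable (hf : Continuous f) {ψ : (ℕ → E) → ℝ} (hψ : Measurable ψ) :
    Measurable (ruelle p f ψ) := by
  have hc : Measurable (fun q : (ℕ → E) × E => cons q.2 q.1) :=
    measurable_cons_pair.comp (measurable_snd.prodMk measurable_fst)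
  have hG : Measurable (fun q : (ℕ → E) × E => Real.exp (f (cons q.2 q.1)) * ψ (cons q.2 q.1)) :=
    (Real.measurable_exp.comp (hf.measurable.comp hc)).mul (hψ.comp hc)
  exact hG.stronglyMeasurable.integral_prod_right'.measurable

lemma ruelle_bdd {M : ℝ} (hM : ∀ z, |f z| ≤ M) {ψ : (ℕ → E) → ℝ} {C : ℝ}
    (hb : ∀ z, |ψ z| ≤ C) : ∀ x, |ruelle p f ψ x| ≤ Real.exp M * C := by
  intro x
  have h1 : ∀ a : E, ‖Real.exp (f (cons a x)) * ψ (cons a x)‖ ≤ Real.exp M * C := by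
    intro a
    rw [Real.norm_eq_abs, abs_mul, abs_of_pos (Real.exp_pos _)]
    exact mul_le_mul (Real.exp_le_exp.mpr ((abs_le.mp (hM _)).2)) (hb _) (abs_nonneg _)
      (Real.exp_pos _).le
  have h2 := MeasureTheory.norm_integral_le_of_norm_le_const (μ := p)
    (Filter.Eventually.of_forall h1)
  simpa [ruelle, Real.norm_eq_abs, measure_univ] using h2

lemma exp_mul_abs_le {M : ℝ} (hM : ∀ z, |f z| ≤ M) {ψ : (ℕ → E) → ℝ} {C : ℝ}
    (hb : ∀ z, |ψ z| ≤ C) (k : ℕ) (w z : ℕ → E) :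
    |Real.exp (birkhoff f k w) * ψ z| ≤ Real.exp (k * M) * C := by
  rw [abs_mul, abs_of_pos (Real.exp_pos _)]
  exact mul_le_mul (Real.exp_le_exp.mpr ((abs_le.mp (abs_birkhoff_le hM k w)).2)) (hb _)
    (abs_nonneg _) (Real.exp_pos _).le

lemma ruelle_iter_meas (hf : Continuous f) (k : ℕ)
    {ψ : (ℕ → E) → ℝ} (hψ : Measurable ψ) : Measurable ((ruelle p f)^[k] ψ) := by
  induction k generalizing ψ with
  | zero => simpa using hψ
  | succ k ih =>
    rw [Function.iterate_succ_apply]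
    exact ih (ruelle_measurable hf hψ)

lemma ruelle_iter_bdd {M : ℝ} (hM : ∀ z, |f z| ≤ M) (k : ℕ)
    {ψ : (ℕ → E) → ℝ} {C : ℝ} (hb : ∀ z, |ψ z| ≤ C) :
    ∀ z, |(ruelle p f)^[k] ψ z| ≤ Real.exp (k * M) * C := by
  induction k generalizing ψ C with
  | zero => intro z; simpa using hb z
  | succ k ih =>
    intro z
    rw [Function.iterate_succ_apply]
    have h1 := ih (ruelle_bdd (p := p) hM hb) z
    have h2 : Real.exp (↑k * M) * (Real.exp M * C) = Real.exp ((↑k + 1) * M) * C := by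
      rw [← mul_assoc, ← Real.exp_add]
      ring_nf
    calc |(ruelle p f)^[k] (ruelle p f ψ) z| ≤ Real.exp (↑k * M) * (Real.exp M * C) := h1
      _ = Real.exp ((↑k + 1) * M) * C := h2
      _ = Real.exp (↑(k + 1) * M) * C := by norm_num

lemma ruelle_iter_rep (hf : Continuous f) {M : ℝ} (hM : ∀ z, |f z| ≤ M) (k : ℕ)
    {ψ : (ℕ → E) → ℝ} (hψ : Measurable ψ) {C : ℝ} (hb : ∀ z, |ψ z| ≤ C) (x : ℕ → E) :
    (ruelle p f)^[k] ψ x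
      = ∫ a : Fin k → E, Real.exp (birkhoff f k (prepend a x)) * ψ (prepend a x)
          ∂(MeasureTheory.Measure.pi fun _ : Fin k => p) := by
  induction k generalizing ψ C x with
  | zero =>
    have heq : (fun a : Fin 0 → E => Real.exp (birkhoff f 0 (prepend a x)) * ψ (prepend a x))
        = fun _ => ψ x := by
      funext a
      rw [birkhoff_zero, prepend_zero_word]
      simp
    haveI : MeasureTheory.IsProbabilityMeasure (MeasureTheory.Measure.pi fun _ : Fin 0 => p) :=
      inferInstance
    rw [Function.iterate_zero, id_eq, heq, MeasureTheory.integral_const,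
      probReal_univ (μ := MeasureTheory.Measure.pi fun _ : Fin 0 => p)]
    simp
  | succ k ih =>
    have hLm : Measurable (ruelle p f ψ) := ruelle_measurable hf hψ
    have hLb : ∀ z, |ruelle p f ψ z| ≤ Real.exp M * C := ruelle_bdd hM hb
    rw [Function.iterate_succ_apply, ih hLm hLb x]
    have hpt : ∀ a : Fin k → E,
        Real.exp (birkhoff f k (prepend a x)) * ruelle p f ψ (prepend a x)
          = ∫ b : E, Real.exp (birkhoff f (k + 1) (cons b (prepend a x)))
              * ψ (cons b (prepend a x)) ∂p := by
      intro a
      rw [show ruelle p f ψ (prepend a x)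
          = ∫ b, Real.exp (f (cons b (prepend a x))) * ψ (cons b (prepend a x)) ∂p from rfl,
        ← MeasureTheory.integral_const_mul]
      congr 1
      funext b
      rw [birkhoff_succ, shift_cons, Real.exp_add]
      ring
    simp only [hpt]
    have hjm : Measurable (fun q : (Fin k → E) × E => cons q.2 (prepend q.1 x)) :=
      measurable_cons_pair.comp
        (measurable_snd.prodMk ((measurable_prepend_right x).comp measurable_fst))
    have hGm : Measurable (fun q : (Fin k → E) × E =>
        Real.exp (birkhoff f (k + 1) (cons q.2 (prepend q.1 x))) * ψ (cons q.2 (prepend q.1 x))) :=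
      (Real.measurable_exp.comp (((continuous_birkhoff hf (k + 1)).measurable).comp hjm)).mul
        (hψ.comp hjm)
    have hGb : ∀ q : (Fin k → E) × E,
        |Real.exp (birkhoff f (k + 1) (cons q.2 (prepend q.1 x))) *
          ψ (cons q.2 (prepend q.1 x))| ≤ Real.exp ((k + 1) * M) * C := by
      intro q
      have := exp_mul_abs_le hM hb (k + 1) (cons q.2 (prepend q.1 x)) (cons q.2 (prepend q.1 x))
      simpa using this
    have hGint : MeasureTheory.Integrable
        (Function.uncurry fun (a : Fin k → E) (b : E) =>
          Real.exp (birkhoff f (k + 1) (cons b (prepend a x))) * ψ (cons b (prepend a x)))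
        ((MeasureTheory.Measure.pi fun _ : Fin k => p).prod p) :=
      integrable_of_bdd' (by exact hGm) (by intro q; exact hGb q)
    rw [MeasureTheory.integral_integral hGint]
    have hmp := (MeasureTheory.measurePreserving_piFinSuccAbove
      (fun _ : Fin (k + 1) => p) 0).symm _
    rw [← hmp.integral_comp' (fun c : Fin (k + 1) → E =>
      Real.exp (birkhoff f (k + 1) (prepend c x)) * ψ (prepend c x))]
    rw [← MeasureTheory.integral_prod_swap]
    congr 1
    funext z
    simp only [MeasurableEquiv.piFinSuccAbove_symm_apply, Fin.insertNthEquiv_zero,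
      Fin.consEquiv_apply, Prod.fst_swap, Prod.snd_swap]
    rw [show ((Fin.consEquiv fun _ : Fin (k + 1) => E) z) = Fin.cons z.1 z.2 from rfl,
      ← cons_prepend]

end AuxMeasure

section Core

variable {E : Type*} [MetricSpace E] [MeasurableSpace E] [BorelSpace E] [SecondCountableTopology E]

/-- The weight function `W_x(a) = e^{f_m(ax)} · (L^n 1)(ax)`. -/
def Wfun (p : MeasureTheory.Measure E) (f : (ℕ → E) → ℝ) (m n : ℕ) (x : ℕ → E)
    (a : Fin m → E) : ℝ :=
  Real.exp (birkhoff f m (prepend a x)) * (ruelle p f)^[n] (fun _ => (1 : ℝ)) (prepend a x)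

variable {p : Measure E} [IsProbabilityMeasure p] {f : (ℕ → E) → ℝ} {M : ℝ}

lemma one_abs_le : ∀ z : ℕ → E, |(1 : ℝ)| ≤ 1 := fun _ => by norm_num

lemma Lone_meas (hf : Continuous f) (n : ℕ) :
    Measurable ((ruelle p f)^[n] (fun _ => (1 : ℝ))) :=
  ruelle_iter_meas hf n measurable_const

lemma Lone_bdd (hM : ∀ z, |f z| ≤ M) (n : ℕ) :
    ∀ z, |(ruelle p f)^[n] (fun _ => (1 : ℝ)) z| ≤ Real.exp (n * M) * 1 :=
  ruelle_iter_bdd hM n one_abs_le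

lemma Lone_lower (hf : Continuous f) (hM : ∀ z, |f z| ≤ M) (n : ℕ) (z : ℕ → E) :
    Real.exp (-(n * M)) ≤ (ruelle p f)^[n] (fun _ => (1 : ℝ)) z := by
  rw [ruelle_iter_rep hf hM n measurable_const one_abs_le z]
  have hint : Integrable (fun b : Fin n → E =>
      Real.exp (birkhoff f n (prepend b z)) * (1 : ℝ)) (Measure.pi fun _ : Fin n => p) := by
    apply integrable_of_bdd' (C := Real.exp (n * M) * 1)
    · exact (Real.measurable_exp.comp
        (((continuous_birkhoff hf n).measurable).comp (measurable_prepend_right z))).mul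
        measurable_const
    · intro b; exact exp_mul_abs_le hM one_abs_le n _ z
  calc Real.exp (-(n * M))
      = ∫ _ : Fin n → E, Real.exp (-(n * M)) ∂(Measure.pi fun _ : Fin n => p) := by
        rw [MeasureTheory.integral_const, probReal_univ]; simp
    _ ≤ ∫ b : Fin n → E, Real.exp (birkhoff f n (prepend b z)) * (1 : ℝ)
          ∂(Measure.pi fun _ : Fin n => p) := by
        apply MeasureTheory.integral_mono (MeasureTheory.integrable_const _) hint
        intro b
        simp only [mul_one]
        exact Real.exp_le_exp.mpr ((abs_le.mp (abs_birkhoff_le hM n (prepend b z))).1)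

lemma W_meas (hf : Continuous f) (m n : ℕ) (x : ℕ → E) :
    Measurable (Wfun p f m n x) :=
  (Real.measurable_exp.comp
      (((continuous_birkhoff hf m).measurable).comp (measurable_prepend_right x))).mul
    ((Lone_meas hf n).comp (measurable_prepend_right x))

lemma W_bdd (hM : ∀ z, |f z| ≤ M) (m n : ℕ) (x : ℕ → E) :
    ∀ a, |Wfun p f m n x a| ≤ Real.exp (m * M) * (Real.exp (n * M) * 1) := fun a =>
  exp_mul_abs_le hM (Lone_bdd hM n) m _ _

lemma W_nonneg (hf : Continuous f) (hM : ∀ z, |f z| ≤ M) (m n : ℕ) (x : ℕ → E)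
    (a : Fin m → E) : 0 ≤ Wfun p f m n x a :=
  mul_nonneg (Real.exp_pos _).le ((Real.exp_pos _).le.trans (Lone_lower hf hM n _))

lemma W_lower (hf : Continuous f) (hM : ∀ z, |f z| ≤ M) (m n : ℕ) (x : ℕ → E)
    (a : Fin m → E) :
    Real.exp (-(m * M)) * Real.exp (-(n * M)) ≤ Wfun p f m n x a := by
  unfold Wfun
  exact mul_le_mul (Real.exp_le_exp.mpr ((abs_le.mp (abs_birkhoff_le hM m (prepend a x))).1))
    (Lone_lower hf hM n _) (Real.exp_pos _).le (Real.exp_pos _).le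

lemma W_rep (hf : Continuous f) (hM : ∀ z, |f z| ≤ M) (m n : ℕ) (x : ℕ → E) (a : Fin m → E) :
    Wfun p f m n x a = ∫ b : Fin n → E,
      Real.exp (birkhoff f (n + m) (prepend (Fin.append b a) x))
        ∂(Measure.pi fun _ : Fin n => p) := by
  unfold Wfun
  rw [ruelle_iter_rep hf hM n measurable_const one_abs_le (prepend a x),
    ← MeasureTheory.integral_const_mul]
  congr 1
  funext b
  rw [mul_one, ← Real.exp_add]
  congr 1
  rw [birkhoff_split f n m, prepend_append, shift_iterate_prepend]
  ring

lemma expB_meas (hf : Continuous f) (N m n : ℕ) (x : ℕ → E) (a : Fin m → E) :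
    Measurable (fun b : Fin n → E => Real.exp (birkhoff f N (prepend (Fin.append b a) x))) := by
  have he : (fun b : Fin n → E => prepend (Fin.append b a) x)
      = fun b => prepend b (prepend a x) := funext fun b => prepend_append b a x
  apply Real.measurable_exp.comp
  apply ((continuous_birkhoff hf N).measurable).comp
  rw [he]
  exact measurable_prepend_right _

lemma expB_bdd (hM : ∀ z, |f z| ≤ M) (N : ℕ) (w : ℕ → E) :
    |Real.exp (birkhoff f N w)| ≤ Real.exp (N * M) := by
  rw [abs_of_pos (Real.exp_pos _)]
  exact Real.exp_le_exp.mpr ((abs_le.mp (abs_birkhoff_le hM N w)).2)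

lemma W_le {Cf α : ℝ}
    (hdist : ∀ (k : ℕ) (c : Fin k → E) (u v : ℕ → E),
      |1 - Real.exp (birkhoff f k (prepend c v) - birkhoff f k (prepend c u))|
        ≤ Cf * dX u v ^ α)
    (hf : Continuous f) (hM : ∀ z, |f z| ≤ M) (m n : ℕ) (x y : ℕ → E) (a : Fin m → E) :
    Wfun p f m n x a ≤ (1 + Cf * dX x y ^ α) * Wfun p f m n y a := by
  rw [W_rep hf hM m n x a, W_rep hf hM m n y a, ← MeasureTheory.integral_const_mul]
  apply MeasureTheory.integral_mono
  · exact integrable_of_bdd' (expB_meas hf (n + m) m n x a) (fun b => expB_bdd hM (n + m) _)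
  · apply integrable_of_bdd' ((expB_meas hf (n + m) m n y a).const_mul _)
      (C := |1 + Cf * dX x y ^ α| * Real.exp ((↑(n + m) : ℝ) * M))
    intro b
    rw [abs_mul]
    exact mul_le_mul_of_nonneg_left (expB_bdd hM (n + m) _) (abs_nonneg _)
  intro b
  have h := hdist (n + m) (Fin.append b a) y x
  rw [dX_symm y x] at h
  have h2 : Real.exp (birkhoff f (n + m) (prepend (Fin.append b a) x)
      - birkhoff f (n + m) (prepend (Fin.append b a) y)) ≤ 1 + Cf * dX x y ^ α := by
    have h3 := (abs_le.mp h).1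
    linarith
  calc Real.exp (birkhoff f (n + m) (prepend (Fin.append b a) x))
      = Real.exp ((birkhoff f (n + m) (prepend (Fin.append b a) x)
          - birkhoff f (n + m) (prepend (Fin.append b a) y))
          + birkhoff f (n + m) (prepend (Fin.append b a) y)) := by rw [sub_add_cancel]
    _ = Real.exp (birkhoff f (n + m) (prepend (Fin.append b a) x)
          - birkhoff f (n + m) (prepend (Fin.append b a) y))
          * Real.exp (birkhoff f (n + m) (prepend (Fin.append b a) y)) := Real.exp_add _ _
    _ ≤ (1 + Cf * dX x y ^ α)
          * Real.exp (birkhoff f (n + m) (prepend (Fin.append b a) y)) :=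
        mul_le_mul_of_nonneg_right h2 (Real.exp_pos _).le

lemma intW (hf : Continuous f) (hM : ∀ z, |f z| ≤ M) (m n : ℕ) (x : ℕ → E) :
    Integrable (Wfun p f m n x) (Measure.pi fun _ : Fin m => p) :=
  integrable_of_bdd' (W_meas hf m n x) (W_bdd hM m n x)

lemma Den_rep (hf : Continuous f) (hM : ∀ z, |f z| ≤ M) (m n : ℕ) (x : ℕ → E) :
    (ruelle p f)^[m + n] (fun _ => (1 : ℝ)) x
      = ∫ a : Fin m → E, Wfun p f m n x a ∂(Measure.pi fun _ : Fin m => p) := by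
  rw [Function.iterate_add_apply,
    ruelle_iter_rep hf hM m (Lone_meas hf n) (Lone_bdd hM n) x]
  rfl

lemma Den_lower (hf : Continuous f) (hM : ∀ z, |f z| ≤ M) (m n : ℕ) (x : ℕ → E) :
    Real.exp (-(m * M)) * Real.exp (-(n * M))
      ≤ (ruelle p f)^[m + n] (fun _ => (1 : ℝ)) x := by
  rw [Den_rep hf hM m n x]
  calc Real.exp (-(m * M)) * Real.exp (-(n * M))
      = ∫ _ : Fin m → E, Real.exp (-(m * M)) * Real.exp (-(n * M))
          ∂(Measure.pi fun _ : Fin m => p) := by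
        rw [MeasureTheory.integral_const, probReal_univ]; simp
    _ ≤ ∫ a : Fin m → E, Wfun p f m n x a ∂(Measure.pi fun _ : Fin m => p) :=
        MeasureTheory.integral_mono (MeasureTheory.integrable_const _) (intW hf hM m n x)
          (fun a => W_lower hf hM m n x a)

lemma Den_pos (hf : Continuous f) (hM : ∀ z, |f z| ≤ M) (m n : ℕ) (x : ℕ → E) :
    0 < (ruelle p f)^[m + n] (fun _ => (1 : ℝ)) x :=
  lt_of_lt_of_le (by positivity) (Den_lower hf hM m n x)

lemma Den_le {Cf α : ℝ}
    (hdist : ∀ (k : ℕ) (c : Fin k → E) (u v : ℕ → E),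
      |1 - Real.exp (birkhoff f k (prepend c v) - birkhoff f k (prepend c u))|
        ≤ Cf * dX u v ^ α)
    (hf : Continuous f) (hM : ∀ z, |f z| ≤ M) (m n : ℕ) (x y : ℕ → E) :
    (ruelle p f)^[m + n] (fun _ => (1 : ℝ)) x
      ≤ (1 + Cf * dX x y ^ α) * (ruelle p f)^[m + n] (fun _ => (1 : ℝ)) y := by
  rw [Den_rep hf hM m n x, Den_rep hf hM m n y, ← MeasureTheory.integral_const_mul]
  exact MeasureTheory.integral_mono (intW hf hM m n x) ((intW hf hM m n y).const_mul _)
    (fun a => W_le hdist hf hM m n x y a)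

end Core

section KeyEstimate

variable {E : Type*} [MetricSpace E] [MeasurableSpace E] [BorelSpace E] [SecondCountableTopology E]
  [Nonempty E]
variable {p : Measure E} [IsProbabilityMeasure p] {f : (ℕ → E) → ℝ} {M Cf α : ℝ}

lemma lip_abs_bdd {Cf α : ℝ} {g : (ℕ → E) → ℝ} (z₀ : ℕ → E)
    (hg : ∀ u v, |g u - g v| ≤ dbar Cf α u v) : ∀ z, |g z| ≤ |g z₀| + 1 := by
  intro z
  have h1 := hg z z₀
  have h2 : dbar Cf α z z₀ ≤ 1 := min_le_left _ _
  have h3 := abs_sub_abs_le_abs_sub (g z) (g z₀)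
  linarith

set_option maxHeartbeats 1000000 in
lemma key_est (hf : Continuous f) (hM : ∀ z, |f z| ≤ M) (hCf : 0 < Cf) (hα : 0 < α)
    (hdist : ∀ (k : ℕ) (c : Fin k → E) (u v : ℕ → E),
      |1 - Real.exp (birkhoff f k (prepend c v) - birkhoff f k (prepend c u))|
        ≤ Cf * dX u v ^ α)
    (m n : ℕ) {g : (ℕ → E) → ℝ} (hgm : Measurable g)
    (hg : ∀ u v, |g u - g v| ≤ dbar Cf α u v) (x y : ℕ → E) :
    Pmn p f m n g x - Pmn p f m n g y
      ≤ 4 * Cf * (((1 : ℝ) / 2) ^ m) ^ α * dX x y ^ α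
        + (1 - ((1 + Cf * dX x y ^ α) ^ 2)⁻¹) := by
  -- abbreviations
  set ε := Cf * dX x y ^ α with hεdef
  set κ := 4 * Cf * (((1 : ℝ) / 2) ^ m) ^ α * dX x y ^ α with hκdef
  set inv : ℝ := ((1 + ε) ^ 2)⁻¹ with hinvdef
  set Wx := Wfun p f m n x with hWxdef
  set Wy := Wfun p f m n y with hWydef
  set Dx := (ruelle p f)^[m + n] (fun _ => (1 : ℝ)) x with hDxdef
  set Dy := (ruelle p f)^[m + n] (fun _ => (1 : ℝ)) y with hDydef
  set r := Dx / Dy with hrdef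
  set BW := Real.exp (m * M) * (Real.exp (n * M) * 1) with hBWdef
  -- basic facts (using definitional unfolding, before `clear_value`)
  have hd0 : (0 : ℝ) ≤ dX x y ^ α := Real.rpow_nonneg (dX_nonneg x y) α
  have hε0 : (0 : ℝ) ≤ ε := mul_nonneg hCf.le hd0
  have hop : (0 : ℝ) < 1 + ε := by linarith
  have hsq : (0 : ℝ) < (1 + ε) ^ 2 := by positivity
  have hinv0 : (0 : ℝ) < inv := by rw [hinvdef]; positivity
  have hinv1 : inv ≤ 1 := by
    rw [hinvdef, inv_le_one_iff₀]
    right; nlinarith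
  have hκ0 : 0 ≤ κ := by
    rw [hκdef]
    have h0 : (0 : ℝ) ≤ (((1 : ℝ) / 2) ^ m) ^ α := Real.rpow_nonneg (by positivity) α
    positivity
  have hinvsq : inv * (1 + ε) ^ 2 = 1 := by rw [hinvdef]; exact inv_mul_cancel₀ hsq.ne'
  have hDx : 0 < Dx := Den_pos hf hM m n x
  have hDy : 0 < Dy := Den_pos hf hM m n y
  have hr0 : 0 < r := div_pos hDx hDy
  have hrDy : r * Dy = Dx := div_mul_cancel₀ Dx hDy.ne'
  have hrle : r ≤ 1 + ε := by
    rw [hrdef, div_le_iff₀ hDy]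
    exact Den_le hdist hf hM m n x y
  have hWx0 : ∀ a, 0 ≤ Wx a := W_nonneg hf hM m n x
  have hWy0 : ∀ a, 0 ≤ Wy a := W_nonneg hf hM m n y
  have hWyx : ∀ a, Wy a ≤ (1 + ε) * Wx a := by
    intro a
    have h : Wfun p f m n y a ≤ (1 + Cf * dX y x ^ α) * Wfun p f m n x a :=
      W_le hdist hf hM m n y x a
    rw [dX_symm y x] at h
    exact h
  have hWxm : Measurable Wx := W_meas hf m n x
  have hWym : Measurable Wy := W_meas hf m n y
  have hWxb : ∀ a, |Wx a| ≤ BW := W_bdd hM m n x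
  have hWyb : ∀ a, |Wy a| ≤ BW := W_bdd hM m n y
  have hintWx : Integrable Wx (Measure.pi fun _ : Fin m => p) := intW hf hM m n x
  have hintWy : Integrable Wy (Measure.pi fun _ : Fin m => p) := intW hf hM m n y
  have hDxrep : Dx = ∫ a : Fin m → E, Wx a ∂(Measure.pi fun _ : Fin m => p) :=
    Den_rep hf hM m n x
  have hDyrep : Dy = ∫ a : Fin m → E, Wy a ∂(Measure.pi fun _ : Fin m => p) :=
    Den_rep hf hM m n y
  have hBW0 : 0 ≤ BW := by rw [hBWdef]; positivity
  clear_value ε κ inv Wx Wy Dx Dy r BW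
  -- bound for g
  obtain ⟨z₀⟩ : Nonempty (ℕ → E) := ⟨fun _ => Classical.arbitrary E⟩
  set Mg := |g z₀| + 1 with hMgdef
  have hgb : ∀ z, |g z| ≤ Mg := lip_abs_bdd z₀ hg
  have hMg0 : 0 < Mg := by rw [hMgdef]; positivity
  clear_value Mg
  -- the centering constant
  set c := sInf (Set.range fun a : Fin m → E => g (prepend a y)) + 1 / 2 with hcdef
  clear_value c
  have hbddb : BddBelow (Set.range fun a : Fin m → E => g (prepend a y)) := by
    refine ⟨-Mg, ?_⟩
    rintro _ ⟨a, rfl⟩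
    have := (abs_le.mp (hgb (prepend a y))).1
    linarith
  have hrne : (Set.range fun a : Fin m → E => g (prepend a y)).Nonempty :=
    Set.range_nonempty _
  have hcb : ∀ a : Fin m → E, |g (prepend a y) - c| ≤ 1 / 2 := by
    intro a
    rw [abs_le]
    constructor
    · have h1 : sInf (Set.range fun a : Fin m → E => g (prepend a y)) ≤ g (prepend a y) :=
        csInf_le hbddb (Set.mem_range_self a)
      rw [hcdef]; linarith
    · have h2 : g (prepend a y) - 1
          ≤ sInf (Set.range fun a : Fin m → E => g (prepend a y)) := by
        apply le_csInf hrne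
        rintro _ ⟨a', rfl⟩
        have h3 := hg (prepend a y) (prepend a' y)
        have h4 : dbar Cf α (prepend a y) (prepend a' y) ≤ 1 := min_le_left _ _
        have h5 := (abs_le.mp h3).2
        linarith
      rw [hcdef]; linarith
  have hcabs : |c| ≤ Mg + 1 := by
    obtain ⟨a⟩ : Nonempty (Fin m → E) := inferInstance
    have h1 := abs_le.mp (hcb a)
    have h2 := abs_le.mp (hgb (prepend a y))
    rw [abs_le]
    constructor
    · linarith [h1.2, h2.1]
    · linarith [h1.1, h2.2]
  have habsgc : ∀ z : ℕ → E, ∀ a : Fin m → E, |g (prepend a z) - c| ≤ Mg + (Mg + 1) := by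
    intro z a
    calc |g (prepend a z) - c| ≤ |g (prepend a z)| + |c| := by
          simpa [Real.norm_eq_abs] using norm_sub_le (g (prepend a z)) c
      _ ≤ Mg + (Mg + 1) := add_le_add (hgb _) hcabs
  -- integrability of numerator integrands
  have hGm : ∀ z : ℕ → E, Measurable (fun a : Fin m → E => g (prepend a z)) :=
    fun z => hgm.comp (measurable_prepend_right z)
  have hintGx : Integrable (fun a : Fin m → E => (g (prepend a x) - c) * Wx a)
      (Measure.pi fun _ : Fin m => p) := by
    apply integrable_of_bdd' (((hGm x).sub measurable_const).mul hWxm)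
      (C := (Mg + (Mg + 1)) * BW)
    intro a
    rw [Pi.mul_apply, abs_mul]
    exact mul_le_mul (habsgc x a) (hWxb a) (abs_nonneg _) (by positivity)
  have hintGy : Integrable (fun a : Fin m → E => (g (prepend a y) - c) * Wy a)
      (Measure.pi fun _ : Fin m => p) := by
    apply integrable_of_bdd' (((hGm y).sub measurable_const).mul hWym)
      (C := (Mg + (Mg + 1)) * BW)
    intro a
    rw [Pi.mul_apply, abs_mul]
    exact mul_le_mul (habsgc y a) (hWyb a) (abs_nonneg _) (by positivity)
  set Nx := ∫ a : Fin m → E, (g (prepend a x) - c) * Wx a ∂(Measure.pi fun _ : Fin m => p)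
    with hNxdef
  set Ny := ∫ a : Fin m → E, (g (prepend a y) - c) * Wy a ∂(Measure.pi fun _ : Fin m => p)
    with hNydef
  clear_value Nx Ny
  -- pointwise estimate
  have hgdiff : ∀ a : Fin m → E, |g (prepend a x) - g (prepend a y)| ≤ κ := by
    intro a
    calc |g (prepend a x) - g (prepend a y)| ≤ dbar Cf α (prepend a x) (prepend a y) := hg _ _
      _ ≤ 4 * Cf * dX (prepend a x) (prepend a y) ^ α := min_le_right _ _
      _ = κ := by
          rw [hκdef, dX_prepend, Real.mul_rpow (by positivity) (dX_nonneg x y)]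
          ring
  have hptw : (fun a : Fin m → E =>
        (g (prepend a x) - c) * Wx a - r * ((g (prepend a y) - c) * Wy a))
      ≤ fun a => (κ + 1 / 2) * Wx a + (r / 2 - inv * r) * Wy a := by
    intro a
    show (g (prepend a x) - c) * Wx a - r * ((g (prepend a y) - c) * Wy a)
      ≤ (κ + 1 / 2) * Wx a + (r / 2 - inv * r) * Wy a
    have hsplit : (g (prepend a x) - c) * Wx a - r * ((g (prepend a y) - c) * Wy a)
        = (g (prepend a x) - g (prepend a y)) * Wx a
          + (g (prepend a y) - c) * (Wx a - r * Wy a) := by ring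
    have hb1 : (g (prepend a x) - g (prepend a y)) * Wx a ≤ κ * Wx a :=
      mul_le_mul_of_nonneg_right ((le_abs_self _).trans (hgdiff a)) (hWx0 a)
    have hk1 : inv * (r * Wy a) ≤ r * Wy a :=
      mul_le_of_le_one_left (mul_nonneg hr0.le (hWy0 a)) hinv1
    have h3 : r * Wy a ≤ (1 + ε) ^ 2 * Wx a := by
      calc r * Wy a ≤ (1 + ε) * Wy a := mul_le_mul_of_nonneg_right hrle (hWy0 a)
        _ ≤ (1 + ε) * ((1 + ε) * Wx a) := mul_le_mul_of_nonneg_left (hWyx a) hop.le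
        _ = (1 + ε) ^ 2 * Wx a := by ring
    have hk2 : inv * (r * Wy a) ≤ Wx a := by
      have h4 : inv * (r * Wy a) ≤ inv * ((1 + ε) ^ 2 * Wx a) :=
        mul_le_mul_of_nonneg_left h3 hinv0.le
      have h5 : inv * ((1 + ε) ^ 2 * Wx a) = Wx a := by
        rw [← mul_assoc, hinvsq, one_mul]
      exact le_trans h4 (le_of_eq h5)
    have habs2 : |Wx a - r * Wy a| ≤ Wx a + r * Wy a - 2 * (inv * (r * Wy a)) := by
      rw [abs_le]
      exact ⟨by linarith, by linarith⟩
    have hb2 : (g (prepend a y) - c) * (Wx a - r * Wy a)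
        ≤ 1 / 2 * (Wx a + r * Wy a - 2 * (inv * (r * Wy a))) := by
      calc (g (prepend a y) - c) * (Wx a - r * Wy a)
          ≤ |(g (prepend a y) - c) * (Wx a - r * Wy a)| := le_abs_self _
        _ = |g (prepend a y) - c| * |Wx a - r * Wy a| := abs_mul _ _
        _ ≤ 1 / 2 * |Wx a - r * Wy a| :=
            mul_le_mul_of_nonneg_right (hcb a) (abs_nonneg _)
        _ ≤ 1 / 2 * (Wx a + r * Wy a - 2 * (inv * (r * Wy a))) :=
            mul_le_mul_of_nonneg_left habs2 (by norm_num)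
    rw [hsplit]
    linarith [hb1, hb2]
  -- integrate the pointwise estimate
  have hintL : Integrable (fun a : Fin m → E =>
      (g (prepend a x) - c) * Wx a - r * ((g (prepend a y) - c) * Wy a))
      (Measure.pi fun _ : Fin m => p) := hintGx.sub (hintGy.const_mul r)
  have hintR : Integrable (fun a : Fin m → E =>
      (κ + 1 / 2) * Wx a + (r / 2 - inv * r) * Wy a)
      (Measure.pi fun _ : Fin m => p) := (hintWx.const_mul _).add (hintWy.const_mul _)
  have hIL : ∫ a : Fin m → E,
        ((g (prepend a x) - c) * Wx a - r * ((g (prepend a y) - c) * Wy a))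
        ∂(Measure.pi fun _ : Fin m => p) = Nx - r * Ny := by
    rw [MeasureTheory.integral_sub hintGx (hintGy.const_mul r),
      MeasureTheory.integral_const_mul, ← hNxdef, ← hNydef]
  have hIR : ∫ a : Fin m → E, ((κ + 1 / 2) * Wx a + (r / 2 - inv * r) * Wy a)
        ∂(Measure.pi fun _ : Fin m => p)
      = (κ + 1 / 2) * Dx + (r / 2 - inv * r) * Dy := by
    rw [MeasureTheory.integral_add (hintWx.const_mul _) (hintWy.const_mul _),
      MeasureTheory.integral_const_mul, MeasureTheory.integral_const_mul, ← hDxrep, ← hDyrep]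
  have hNr : Nx - r * Ny ≤ (κ + 1 / 2) * Dx + (r / 2 - inv * r) * Dy := by
    rw [← hIL, ← hIR]
    exact MeasureTheory.integral_mono hintL hintR hptw
  have hNr2 : Nx - r * Ny ≤ (κ + 1 - inv) * Dx := by
    have h5 : (r / 2 - inv * r) * Dy = (1 / 2 - inv) * (r * Dy) := by ring
    rw [h5, hrDy] at hNr
    linarith [hNr]
  -- identification of the numerators of `Pmn`
  have hNum : ∀ (z : ℕ → E) (Wz : (Fin m → E) → ℝ), Wz = Wfun p f m n z →
      (ruelle p f)^[m] (fun w => g w * (ruelle p f)^[n] (fun _ => (1 : ℝ)) w) z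
        = (∫ a : Fin m → E, (g (prepend a z) - c) * Wz a ∂(Measure.pi fun _ : Fin m => p))
          + c * (ruelle p f)^[m + n] (fun _ => (1 : ℝ)) z := by
    intro z Wz hWz
    have hψm : Measurable (fun w => g w * (ruelle p f)^[n] (fun _ => (1 : ℝ)) w) :=
      hgm.mul (Lone_meas hf n)
    have hψb : ∀ w, |g w * (ruelle p f)^[n] (fun _ => (1 : ℝ)) w|
        ≤ Mg * (Real.exp (n * M) * 1) := by
      intro w
      rw [abs_mul]
      exact mul_le_mul (hgb w) (Lone_bdd hM n w) (abs_nonneg _) (by positivity)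
    rw [ruelle_iter_rep hf hM m hψm hψb z]
    have heq : (fun a : Fin m → E => Real.exp (birkhoff f m (prepend a z)) *
        (g (prepend a z) * (ruelle p f)^[n] (fun _ => (1 : ℝ)) (prepend a z)))
        = fun a => (g (prepend a z) - c) * Wz a + c * Wz a := by
      funext a
      rw [hWz]
      unfold Wfun
      ring
    rw [heq]
    have hWzm : Measurable Wz := by rw [hWz]; exact W_meas hf m n z
    have hWzb : ∀ a, |Wz a| ≤ Real.exp (m * M) * (Real.exp (n * M) * 1) := by
      rw [hWz]; exact W_bdd hM m n z
    have hintWz : Integrable Wz (Measure.pi fun _ : Fin m => p) := by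
      rw [hWz]; exact intW hf hM m n z
    have hintgz : Integrable (fun a => (g (prepend a z) - c) * Wz a)
        (Measure.pi fun _ : Fin m => p) := by
      apply integrable_of_bdd' (((hGm z).sub measurable_const).mul hWzm)
        (C := (Mg + (Mg + 1)) * (Real.exp (m * M) * (Real.exp (n * M) * 1)))
      intro a
      rw [Pi.mul_apply, abs_mul]
      exact mul_le_mul (habsgc z a) (hWzb a) (abs_nonneg _) (by positivity)
    rw [MeasureTheory.integral_add hintgz (hintWz.const_mul c),
      MeasureTheory.integral_const_mul, Den_rep hf hM m n z, hWz]
  have hPx : Pmn p f m n g x = Nx / Dx + c := by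
    have h := hNum x Wx hWxdef
    rw [show Pmn p f m n g x = (ruelle p f)^[m]
        (fun w => g w * (ruelle p f)^[n] (fun _ => (1 : ℝ)) w) x
        / (ruelle p f)^[m + n] (fun _ => (1 : ℝ)) x from rfl, h, ← hNxdef, ← hDxdef,
      add_div, mul_div_cancel_right₀ c hDx.ne']
  have hPy : Pmn p f m n g y = Ny / Dy + c := by
    have h := hNum y Wy hWydef
    rw [show Pmn p f m n g y = (ruelle p f)^[m]
        (fun w => g w * (ruelle p f)^[n] (fun _ => (1 : ℝ)) w) y
        / (ruelle p f)^[m + n] (fun _ => (1 : ℝ)) y from rfl, h, ← hNydef, ← hDydef,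
      add_div, mul_div_cancel_right₀ c hDy.ne']
  rw [hPx, hPy]
  have h6 : r * Ny / Dx = Ny / Dy := by
    rw [hrdef]
    field_simp
  have hdiv : Nx / Dx - Ny / Dy = (Nx - r * Ny) / Dx := by
    rw [sub_div, h6]
  have hfinal : (Nx - r * Ny) / Dx ≤ κ + 1 - inv := by
    rw [div_le_iff₀ hDx]
    linarith [hNr2]
  calc Nx / Dx + c - (Ny / Dy + c) = (Nx - r * Ny) / Dx := by rw [← hdiv]; ring
    _ ≤ κ + 1 - inv := hfinal
    _ = κ + (1 - inv) := by ring

end KeyEstimate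

section Wass

variable {E : Type*} [MetricSpace E] [MeasurableSpace E] [BorelSpace E]
  [SecondCountableTopology E] [Nonempty E]

lemma wass_set_bddAbove {Cf α : ℝ} (hα : 0 < α) (μ₁ μ₂ : Measure (ℕ → E))
    [IsProbabilityMeasure μ₁] [IsProbabilityMeasure μ₂] :
    BddAbove {r : ℝ | ∃ g : (ℕ → E) → ℝ,
      (∀ x y, |g x - g y| ≤ dbar Cf α x y) ∧ r = (∫ x, g x ∂μ₁) - ∫ x, g x ∂μ₂} := by
  use 2
  rintro r ⟨g, hglip, rfl⟩
  obtain ⟨z₀⟩ : Nonempty (ℕ → E) := ⟨fun _ => Classical.arbitrary E⟩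
  have hgc : Continuous g := continuous_of_dbar_lip hα hglip
  have hgm : Measurable g := hgc.measurable
  have hgb : ∀ z, |g z| ≤ |g z₀| + 1 := lip_abs_bdd z₀ hglip
  have key : ∀ (μ : Measure (ℕ → E)), IsProbabilityMeasure μ → |(∫ x, g x ∂μ) - g z₀| ≤ 1 := by
    intro μ hμ
    have hint : Integrable g μ := integrable_of_bdd' hgm hgb
    have he : (∫ x, g x ∂μ) - g z₀ = ∫ x, (g x - g z₀) ∂μ := by
      rw [MeasureTheory.integral_sub hint (MeasureTheory.integrable_const _),
        MeasureTheory.integral_const, probReal_univ]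
      simp
    rw [he]
    have hb : ∀ x : ℕ → E, ‖g x - g z₀‖ ≤ 1 := fun x => by
      rw [Real.norm_eq_abs]
      exact (hglip x z₀).trans (min_le_left _ _)
    have h2 := MeasureTheory.norm_integral_le_of_norm_le_const (μ := μ)
      (Filter.Eventually.of_forall hb)
    simpa [Real.norm_eq_abs, measure_univ] using h2
  have k1 := abs_le.mp (key μ₁ inferInstance)
  have k2 := abs_le.mp (key μ₂ inferInstance)
  linarith [k1.2, k2.1]

lemma wass_nonneg {Cf α : ℝ} (hCf : 0 < Cf) (hα : 0 < α) (μ₁ μ₂ : Measure (ℕ → E))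
    [IsProbabilityMeasure μ₁] [IsProbabilityMeasure μ₂] :
    0 ≤ wass Cf α μ₁ μ₂ := by
  apply le_csSup (wass_set_bddAbove hα μ₁ μ₂)
  refine ⟨fun _ => 0, fun x y => ?_, by simp⟩
  have h0 : (0 : ℝ) ≤ 4 * Cf * dX x y ^ α :=
    mul_nonneg (mul_nonneg (by norm_num) hCf.le) (Real.rpow_nonneg (dX_nonneg _ _) α)
  simp only [sub_zero, abs_zero]
  exact le_min zero_le_one h0

end Wass

set_option maxHeartbeats 2000000 in
/-- The dual operators `(P^m_n)^*` strictly contract the Wasserstein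
metric associated to `d̄`, for some `m ∈ ℕ`, uniformly in `n`. -/
theorem statement4 {E : Type*} [MetricSpace E] [CompleteSpace E]
    [TopologicalSpace.SeparableSpace E] [MeasurableSpace E] [BorelSpace E] [Nonempty E]
    (p : Measure E) [IsProbabilityMeasure p]
    (α : ℝ) (hα0 : 0 < α) (hα1 : α < 1)
    (f : (ℕ → E) → ℝ) (hf : MemHol α f)
    (Cf : ℝ) (hCf : 0 < Cf)
    (hdist : ∀ (n : ℕ) (a : Fin n → E) (x y : ℕ → E),
      |1 - Real.exp (birkhoff f n (prepend a y) - birkhoff f n (prepend a x))|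
        ≤ Cf * dX x y ^ α) :
    ∃ (m : ℕ) (t : ℝ), 1 ≤ m ∧ 0 < t ∧ t < 1 ∧
      ∀ (n : ℕ) (μ₁ μ₂ ν₁ ν₂ : Measure (ℕ → E)),
        IsProbabilityMeasure μ₁ → IsProbabilityMeasure μ₂ →
        IsProbabilityMeasure ν₁ → IsProbabilityMeasure ν₂ →
        (∀ φ : (ℕ → E) → ℝ, Measurable φ → Bdd φ →
          (∫ x, φ x ∂ν₁) = ∫ x, Pmn p f m n φ x ∂μ₁) →
        (∀ φ : (ℕ → E) → ℝ, Measurable φ → Bdd φ →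
          (∫ x, φ x ∂ν₂) = ∫ x, Pmn p f m n φ x ∂μ₂) →
        wass Cf α ν₁ ν₂ ≤ t * wass Cf α μ₁ μ₂ := by
  classical
  haveI hsc : SecondCountableTopology E := UniformSpace.secondCountable_of_separable E
  obtain ⟨hfc, ⟨M, hM⟩, -⟩ := hf
  -- choice of constants
  obtain ⟨δ, hδdef⟩ : ∃ δ : ℝ, δ = ((1 + Cf) ^ 2)⁻¹ := ⟨_, rfl⟩
  have hδ0 : 0 < δ := by rw [hδdef]; positivity
  have hδ1 : δ ≤ 1 := by
    rw [hδdef, inv_le_one_iff₀]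
    right; nlinarith
  obtain ⟨γ, hγdef⟩ : ∃ γ : ℝ, γ = ((1 : ℝ) / 2) ^ α := ⟨_, rfl⟩
  have hγ0 : 0 < γ := by rw [hγdef]; exact Real.rpow_pos_of_pos (by norm_num) α
  have hγ1 : γ < 1 := by
    rw [hγdef]; exact Real.rpow_lt_one (by norm_num) (by norm_num) hα0
  have hε₀0 : (0 : ℝ) < min (1 / 4 : ℝ) (δ / (8 * Cf)) := lt_min (by norm_num) (by positivity)
  obtain ⟨m₀, hm₀⟩ := exists_pow_lt_of_lt_one hε₀0 hγ1
  refine ⟨max 1 m₀, max (3 / 4) (1 - δ / 2), le_max_left _ _, ?_, ?_, ?_⟩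
  · exact lt_of_lt_of_le (by norm_num) (le_max_left _ _)
  · exact max_lt (by norm_num) (by linarith)
  obtain ⟨m, hmdef⟩ : ∃ m : ℕ, m = max 1 m₀ := ⟨_, rfl⟩
  obtain ⟨t, htdef⟩ : ∃ t : ℝ, t = max (3 / 4 : ℝ) (1 - δ / 2) := ⟨_, rfl⟩
  rw [← hmdef, ← htdef]
  have ht34 : 3 / 4 ≤ t := htdef ▸ le_max_left _ _
  have ht2 : 1 - δ / 2 ≤ t := htdef ▸ le_max_right _ _
  have ht0 : 0 < t := by linarith
  have hγm : γ ^ m ≤ γ ^ m₀ := by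
    rw [hmdef]
    exact pow_le_pow_of_le_one hγ0.le hγ1.le (le_max_right _ _)
  have hγm14 : γ ^ m ≤ 1 / 4 := hγm.trans (hm₀.le.trans (min_le_left _ _))
  have hγmδ : 4 * Cf * γ ^ m ≤ δ / 2 := by
    have h1 : γ ^ m ≤ δ / (8 * Cf) := hγm.trans (hm₀.le.trans (min_le_right _ _))
    have h2 : 4 * Cf * γ ^ m ≤ 4 * Cf * (δ / (8 * Cf)) :=
      mul_le_mul_of_nonneg_left h1 (by positivity)
    have h3 : 4 * Cf * (δ / (8 * Cf)) = δ / 2 := by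
      field_simp
      ring
    linarith
  have hγm0 : 0 ≤ γ ^ m := pow_nonneg hγ0.le m
  have hqα : (((1 : ℝ) / 2) ^ m) ^ α = γ ^ m := by
    rw [hγdef, ← Real.rpow_natCast ((1 : ℝ) / 2) m,
      ← Real.rpow_natCast (((1 : ℝ) / 2) ^ (α : ℝ)) m,
      ← Real.rpow_mul (by norm_num : (0 : ℝ) ≤ 1 / 2),
      ← Real.rpow_mul (by norm_num : (0 : ℝ) ≤ 1 / 2), mul_comm]
  -- the uniform contraction estimate
  have hcontr : ∀ (n : ℕ) (g : (ℕ → E) → ℝ), Measurable g →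
      (∀ u v, |g u - g v| ≤ dbar Cf α u v) →
      ∀ x y, |Pmn p f m n g x - Pmn p f m n g y| ≤ t * dbar Cf α x y := by
    intro n g hgm hglip x y
    have h1 := key_est (p := p) hfc hM hCf hα0 hdist m n hgm hglip x y
    have h2 := key_est (p := p) hfc hM hCf hα0 hdist m n hgm hglip y x
    rw [dX_symm y x] at h2
    rw [hqα] at h1 h2
    have habs : |Pmn p f m n g x - Pmn p f m n g y|
        ≤ 4 * Cf * γ ^ m * dX x y ^ α + (1 - ((1 + Cf * dX x y ^ α) ^ 2)⁻¹) := by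
      rw [abs_le]
      exact ⟨by linarith, h1⟩
    have hd0 : (0 : ℝ) ≤ dX x y ^ α := Real.rpow_nonneg (dX_nonneg x y) α
    have hd1 : dX x y ^ α ≤ 1 := Real.rpow_le_one (dX_nonneg x y) (dX_le_one x y) hα0.le
    have he0 : (0 : ℝ) ≤ Cf * dX x y ^ α := mul_nonneg hCf.le hd0
    have heC : Cf * dX x y ^ α ≤ Cf := by nlinarith
    have hsq : (0 : ℝ) < (1 + Cf * dX x y ^ α) ^ 2 := by positivity
    have hA : 1 - ((1 + Cf * dX x y ^ α) ^ 2)⁻¹ ≤ 2 * (Cf * dX x y ^ α) := by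
      have hkey : 1 - ((1 + Cf * dX x y ^ α) ^ 2)⁻¹
          = (2 * (Cf * dX x y ^ α) + (Cf * dX x y ^ α) ^ 2)
            / (1 + Cf * dX x y ^ α) ^ 2 := by
        field_simp
        ring
      rw [hkey, div_le_iff₀ hsq]
      nlinarith [he0]
    have hB : 1 - ((1 + Cf * dX x y ^ α) ^ 2)⁻¹ ≤ 1 - δ := by
      have h5 : δ ≤ ((1 + Cf * dX x y ^ α) ^ 2)⁻¹ := by
        rw [hδdef]
        apply inv_anti₀ hsq
        nlinarith
      linarith
    rcases le_or_gt (4 * Cf * dX x y ^ α) 1 with hcase | hcase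
    · -- small distance: dbar = 4 Cf d^α
      rw [dbar, min_eq_right hcase]
      have hprod : 0 ≤ (4 * Cf * dX x y ^ α) * (t - (γ ^ m + 1 / 2)) :=
        mul_nonneg (by positivity) (by linarith)
      nlinarith [habs, hA, hprod]
    · -- large distance: dbar = 1
      rw [dbar, min_eq_left hcase.le, mul_one]
      have h7 : 4 * Cf * γ ^ m * dX x y ^ α ≤ 4 * Cf * γ ^ m := by
        have : (0 : ℝ) ≤ 4 * Cf * γ ^ m := by positivity
        nlinarith
      linarith [habs, hB, h7, hγmδ, ht2]
  -- pass to the Wasserstein distances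
  intro n μ₁ μ₂ ν₁ ν₂ hμ₁ hμ₂ hν₁ hν₂ h1 h2
  haveI := hμ₁; haveI := hμ₂; haveI := hν₁; haveI := hν₂
  obtain ⟨z₀⟩ : Nonempty (ℕ → E) := ⟨fun _ => Classical.arbitrary E⟩
  rw [show wass Cf α ν₁ ν₂ = sSup {r : ℝ | ∃ g : (ℕ → E) → ℝ,
    (∀ x y, |g x - g y| ≤ dbar Cf α x y) ∧ r = (∫ x, g x ∂ν₁) - ∫ x, g x ∂ν₂} from rfl]
  apply Real.sSup_le
  · rintro r ⟨g, hglip, rfl⟩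
    have hgc : Continuous g := continuous_of_dbar_lip hα0 hglip
    have hgm : Measurable g := hgc.measurable
    have hgb : ∀ z, |g z| ≤ |g z₀| + 1 := lip_abs_bdd z₀ hglip
    rw [h1 g hgm ⟨_, hgb⟩, h2 g hgm ⟨_, hgb⟩]
    have hGlip : ∀ u v, |t⁻¹ * Pmn p f m n g u - t⁻¹ * Pmn p f m n g v| ≤ dbar Cf α u v := by
      intro u v
      rw [← mul_sub, abs_mul, abs_of_pos (inv_pos.mpr ht0)]
      have h3 := hcontr n g hgm hglip u v
      calc t⁻¹ * |Pmn p f m n g u - Pmn p f m n g v| ≤ t⁻¹ * (t * dbar Cf α u v) :=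
            mul_le_mul_of_nonneg_left h3 (inv_pos.mpr ht0).le
        _ = dbar Cf α u v := by rw [← mul_assoc, inv_mul_cancel₀ ht0.ne', one_mul]
    have hmem : (∫ x, t⁻¹ * Pmn p f m n g x ∂μ₁) - ∫ x, t⁻¹ * Pmn p f m n g x ∂μ₂
        ∈ {r : ℝ | ∃ g : (ℕ → E) → ℝ,
          (∀ x y, |g x - g y| ≤ dbar Cf α x y) ∧ r = (∫ x, g x ∂μ₁) - ∫ x, g x ∂μ₂} :=
      ⟨fun z => t⁻¹ * Pmn p f m n g z, hGlip, rfl⟩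
    have hle := le_csSup (wass_set_bddAbove hα0 μ₁ μ₂) hmem
    rw [MeasureTheory.integral_const_mul, MeasureTheory.integral_const_mul] at hle
    have heq : (∫ x, Pmn p f m n g x ∂μ₁) - ∫ x, Pmn p f m n g x ∂μ₂
        = t * (t⁻¹ * ∫ x, Pmn p f m n g x ∂μ₁ - t⁻¹ * ∫ x, Pmn p f m n g x ∂μ₂) := by
      field_simp
    rw [heq]
    exact mul_le_mul_of_nonneg_left hle ht0.le
  · exact mul_nonneg ht0.le (wass_nonneg hCf hα0 μ₁ μ₂)


end
end

section
/- Let S be an arbitrary topological space and let M^a_1(S) denote the set of functionals μ in the topological dual of C_b(S,ℝ) with operator norm one and μ(f) ≥ 0 for every f ≥ 0. For μ ∈ M^a_1(S), the following are equivalent: (i) μ is an extreme point of M^a_1(S); (iv) μ is a lattice homomorphism, i.e. |μ(f)| = μ(|f|) for all f ∈ C_b(S,ℝ); (v) μ is an algebra homomorphism, i.e. μ(f₁·f₂) = μ(f₁)·μ(f₂) for all f₁, f₂ ∈ C_b(S,ℝ). -/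
open BoundedContinuousFunction

/-- `M^a_1(S)`: the norm-one positive functionals on `C_b(S,ℝ)`. -/
def Ma1S (S : Type*) [TopologicalSpace S] : Set ((S →ᵇ ℝ) →L[ℝ] ℝ) :=
  {μ | ‖μ‖ = 1 ∧ ∀ f : S →ᵇ ℝ, 0 ≤ f → 0 ≤ μ f}

section aux
variable {S : Type*} [TopologicalSpace S]

lemma bcf_le_iff {f g : S →ᵇ ℝ} : f ≤ g ↔ ∀ x, f x ≤ g x := Iff.rfl

lemma bcf_sq_nonneg (h : S →ᵇ ℝ) : 0 ≤ h * h := by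
  rw [bcf_le_iff]; intro x; simp [mul_self_nonneg]

lemma bcf_expand (g : S →ᵇ ℝ) (c : ℝ) :
    (g - c • 1) * (g - c • 1) = g * g - (2*c) • g + (c*c) • (1 : S →ᵇ ℝ) := by
  ext x; simp; ring

variable (ν : (S →ᵇ ℝ) →L[ℝ] ℝ)

lemma pos_mono (hp : ∀ f : S →ᵇ ℝ, 0 ≤ f → 0 ≤ ν f) {f g : S →ᵇ ℝ} (h : f ≤ g) :
    ν f ≤ ν g := by
  have := hp (g - f) (by simpa using h)
  rw [map_sub] at this; linarith

lemma pos_abs (hp : ∀ f : S →ᵇ ℝ, 0 ≤ f → 0 ≤ ν f) (f : S →ᵇ ℝ) : |ν f| ≤ ν |f| := by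
  rw [abs_le]
  constructor
  · have := pos_mono ν hp (f := -f) (g := |f|) (by rw [bcf_le_iff]; intro x; simpa using (neg_le_abs (f x)))
    rw [map_neg] at this; linarith
  · exact pos_mono ν hp (by rw [bcf_le_iff]; intro x; simpa using le_abs_self (f x))

lemma pos_norm [Nonempty S] (hp : ∀ f : S →ᵇ ℝ, 0 ≤ f → 0 ≤ ν f) : ‖ν‖ = ν 1 := by
  refine le_antisymm ?_ ?_
  · refine ν.opNorm_le_bound (hp 1 (by rw [bcf_le_iff]; intro x; simp)) (fun f => ?_)
    have h1 : f ≤ ‖f‖ • 1 := by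
      rw [bcf_le_iff]; intro x
      simpa using (abs_le.1 (by simpa [Real.norm_eq_abs] using f.norm_coe_le_norm x)).2
    have h2 : -(‖f‖ • 1) ≤ f := by
      rw [bcf_le_iff]; intro x
      simpa using (abs_le.1 (by simpa [Real.norm_eq_abs] using f.norm_coe_le_norm x)).1
    have t1 := pos_mono ν hp h1
    have t2 := pos_mono ν hp h2
    rw [map_smul] at t1
    rw [map_neg, map_smul] at t2
    rw [smul_eq_mul] at t1 t2
    rw [Real.norm_eq_abs, abs_le]
    constructor <;> linarith [mul_comm (ν 1) ‖f‖]
  · calc ν 1 ≤ ‖ν 1‖ := le_abs_self _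
      _ ≤ ‖ν‖ * ‖(1 : S →ᵇ ℝ)‖ := ν.le_opNorm 1
      _ = ‖ν‖ := by simp

lemma pos_CS [Nonempty S] (hp : ∀ f : S →ᵇ ℝ, 0 ≤ f → 0 ≤ ν f) (h1 : ν 1 = 1)
    (g : S →ᵇ ℝ) : (ν g)^2 ≤ ν (g * g) := by
  have h0 := hp _ (bcf_sq_nonneg (g - (ν g) • 1))
  rw [bcf_expand, map_add, map_sub, map_smul, map_smul, h1] at h0
  simp at h0; nlinarith

end aux

section main
variable {S : Type*} [TopologicalSpace S] [Nonempty S] (μ : (S →ᵇ ℝ) →L[ℝ] ℝ)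

lemma mult_to_lattice (hp : ∀ f : S →ᵇ ℝ, 0 ≤ f → 0 ≤ μ f)
    (hm : ∀ f₁ f₂ : S →ᵇ ℝ, μ (f₁ * f₂) = μ f₁ * μ f₂) (f : S →ᵇ ℝ) :
    |μ f| = μ |f| := by
  have habs : |f| * |f| = f * f := by ext x; simp [abs_mul_abs_self]
  have h2 : μ |f| * μ |f| = μ f * μ f := by rw [← hm, ← hm, habs]
  have h3 : 0 ≤ μ |f| := hp _ (by rw [bcf_le_iff]; intro x; simp [abs_nonneg])
  rcases abs_cases (μ f) with ⟨h, _⟩ | ⟨h, _⟩ <;> nlinarith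

lemma lattice_to_mult (hp : ∀ f : S →ᵇ ℝ, 0 ≤ f → 0 ≤ μ f) (h1 : μ 1 = 1)
    (hl : ∀ f : S →ᵇ ℝ, |μ f| = μ |f|) :
    ∀ f₁ f₂ : S →ᵇ ℝ, μ (f₁ * f₂) = μ f₁ * μ f₂ := by
  have hsq : ∀ f : S →ᵇ ℝ, μ (f * f) = μ f * μ f := by
    intro f
    set t := μ f with ht
    have key : μ |f - t • 1| = 0 := by
      rw [← hl, map_sub, map_smul, h1]; simp; exact sub_eq_zero.2 ht.symm
    have hb : |f * f - (t * t) • 1| ≤ (‖f‖ + |t|) • |f - t • 1| := by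
      rw [bcf_le_iff]; intro x
      have hfx : |f x| ≤ ‖f‖ := by simpa [Real.norm_eq_abs] using f.norm_coe_le_norm x
      have e : |f x * f x - t * t| = |f x - t| * |f x + t| := by
        rw [← abs_mul]; ring_nf
      have e2 : |f x + t| ≤ ‖f‖ + |t| := by
        calc |f x + t| ≤ |f x| + |t| := abs_add_le _ _
          _ ≤ ‖f‖ + |t| := by linarith
      simp only [coe_abs, Pi.abs_apply, coe_sub, Pi.sub_apply, coe_mul, Pi.mul_apply,
        coe_smul, Pi.smul_apply, coe_one, Pi.one_apply, smul_eq_mul, mul_one]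
      calc |f x * f x - t * t| = |f x - t| * |f x + t| := e
        _ ≤ |f x - t| * (‖f‖ + |t|) := mul_le_mul_of_nonneg_left e2 (abs_nonneg _)
        _ = (‖f‖ + |t|) * |f x - t| := mul_comm _ _
    have h4 := (pos_abs μ hp (f * f - (t * t) • 1)).trans (pos_mono μ hp hb)
    rw [map_smul, smul_eq_mul, key, mul_zero, map_sub, map_smul, h1, smul_eq_mul,
      mul_one] at h4
    have h5 := abs_nonneg (μ (f * f) - t * t)
    have : μ (f * f) - t * t = 0 := by rw [← abs_eq_zero]; linarith
    linarith
  intro f₁ f₂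
  have e : (f₁ + f₂) * (f₁ + f₂) = f₁ * f₁ + (2 : ℝ) • (f₁ * f₂) + f₂ * f₂ := by
    ext x; simp; ring
  have h := hsq (f₁ + f₂)
  rw [e, map_add, map_add, map_smul, map_add, smul_eq_mul] at h
  have a1 := hsq f₁; have a2 := hsq f₂
  nlinarith [h, a1, a2]

set_option maxHeartbeats 1000000 in
lemma mult_to_extreme (hμ : μ ∈ Ma1S S)
    (hm : ∀ f₁ f₂ : S →ᵇ ℝ, μ (f₁ * f₂) = μ f₁ * μ f₂) :
    μ ∈ Set.extremePoints ℝ (Ma1S S) := by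
  have h1 : μ 1 = 1 := by rw [← pos_norm μ hμ.2]; exact hμ.1
  rw [mem_extremePoints]
  refine ⟨hμ, fun ν₁ hν₁ ν₂ hν₂ hseg => ?_⟩
  obtain ⟨a, b, ha, hb, hab, habμ⟩ := hseg
  have key : ∀ f : S →ᵇ ℝ, μ ((f - μ f • 1) * (f - μ f • 1)) = 0 := by
    intro f
    rw [hm]
    have : μ (f - μ f • 1) = 0 := by rw [map_sub, map_smul, h1]; simp
    rw [this, mul_zero]
  have main : ∀ ν : (S →ᵇ ℝ) →L[ℝ] ℝ, ν ∈ Ma1S S →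
      (∀ f : S →ᵇ ℝ, ν ((f - μ f • 1) * (f - μ f • 1)) = 0) → ν = μ := by
    intro ν hν hz
    have hν1 : ν 1 = 1 := by rw [← pos_norm ν hν.2]; exact hν.1
    ext f
    have hcs := pos_CS ν hν.2 hν1 (f - μ f • 1)
    rw [hz f] at hcs
    have : ν (f - μ f • 1) = 0 := by nlinarith [sq_nonneg (ν (f - μ f • 1))]
    rw [map_sub, map_smul, hν1, smul_eq_mul, mul_one] at this
    linarith
  have z12 : ∀ f : S →ᵇ ℝ,
      ν₁ ((f - μ f • 1) * (f - μ f • 1)) = 0 ∧ ν₂ ((f - μ f • 1) * (f - μ f • 1)) = 0 := by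
    intro f
    set q := (f - μ f • 1) * (f - μ f • 1) with hq
    have hq0 : (0 : S →ᵇ ℝ) ≤ q := bcf_sq_nonneg _
    have e1 : 0 ≤ ν₁ q := hν₁.2 _ hq0
    have e2 : 0 ≤ ν₂ q := hν₂.2 _ hq0
    have : a * ν₁ q + b * ν₂ q = 0 := by
      have hcongr : (a • ν₁ + b • ν₂) q = μ q := by rw [habμ]
      rw [ContinuousLinearMap.add_apply, ContinuousLinearMap.smul_apply,
        ContinuousLinearMap.smul_apply, smul_eq_mul, smul_eq_mul, key f] at hcongr
      exact hcongr
    have hx : a * ν₁ q = 0 := by linarith [mul_nonneg ha.le e1, mul_nonneg hb.le e2]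
    have hy : b * ν₂ q = 0 := by linarith [mul_nonneg ha.le e1, mul_nonneg hb.le e2]
    exact ⟨(mul_eq_zero.1 hx).resolve_left ha.ne', (mul_eq_zero.1 hy).resolve_left hb.ne'⟩
  exact ⟨main ν₁ hν₁ (fun f => (z12 f).1), main ν₂ hν₂ (fun f => (z12 f).2)⟩

end main

section main2
variable {S : Type*} [TopologicalSpace S] [Nonempty S] (μ : (S →ᵇ ℝ) →L[ℝ] ℝ)

set_option maxHeartbeats 1000000 in
lemma extreme_to_mult (hμ : μ ∈ Ma1S S) (hext : μ ∈ Set.extremePoints ℝ (Ma1S S)) :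
    ∀ f₁ f₂ : S →ᵇ ℝ, μ (f₁ * f₂) = μ f₁ * μ f₂ := by
  rw [mem_extremePoints] at hext
  have hp := hμ.2
  have h1 : μ 1 = 1 := by rw [← pos_norm μ hp]; exact hμ.1
  -- zero case
  have zero_case : ∀ g : S →ᵇ ℝ, 0 ≤ g → μ g = 0 → ∀ f : S →ᵇ ℝ, μ (g * f) = 0 := by
    intro g hg0 hgz f
    have hb : |g * f| ≤ ‖f‖ • g := by
      rw [bcf_le_iff]; intro x
      have hg0x : 0 ≤ g x := hg0 x
      have hfx : |f x| ≤ ‖f‖ := by simpa [Real.norm_eq_abs] using f.norm_coe_le_norm x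
      simp only [coe_abs, Pi.abs_apply, coe_mul, Pi.mul_apply, coe_smul, Pi.smul_apply,
        smul_eq_mul]
      calc |g x * f x| = g x * |f x| := by rw [abs_mul, abs_of_nonneg hg0x]
        _ ≤ g x * ‖f‖ := mul_le_mul_of_nonneg_left hfx hg0x
        _ = ‖f‖ * g x := mul_comm _ _
    have h4 := (pos_abs μ hp (g * f)).trans (pos_mono μ hp hb)
    rw [map_smul, smul_eq_mul, hgz, mul_zero] at h4
    have := abs_nonneg (μ (g * f))
    rw [← abs_eq_zero]; linarith
  -- main claim for 0 ≤ g ≤ 1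
  have claim : ∀ g : S →ᵇ ℝ, 0 ≤ g → g ≤ 1 → ∀ f : S →ᵇ ℝ, μ (g * f) = μ g * μ f := by
    intro g hg0 hg1 f
    have hμg0 : 0 ≤ μ g := hp g hg0
    have hμg1 : μ g ≤ 1 := by have := pos_mono μ hp hg1; rwa [h1] at this
    rcases eq_or_lt_of_le hμg0 with h0 | h0
    · rw [← h0, zero_mul, zero_case g hg0 h0.symm f]
    rcases eq_or_lt_of_le hμg1 with h1' | h1'
    · -- μ g = 1
      have hg1x : (0 : S →ᵇ ℝ) ≤ 1 - g := by
        rw [bcf_le_iff]; intro x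
        simpa using hg1 x
      have hgz : μ (1 - g) = 0 := by rw [map_sub, h1, h1']; ring
      have := zero_case (1 - g) hg1x hgz f
      rw [sub_mul, one_mul, map_sub] at this
      rw [h1']; linarith
    · -- 0 < μ g < 1
      have ha0 : μ g ≠ 0 := h0.ne'
      have ha1pos : 0 < 1 - μ g := by linarith
      have ha1 : (1 : ℝ) - μ g ≠ 0 := ha1pos.ne'
      have hg1x : (0 : S →ᵇ ℝ) ≤ 1 - g := by
        rw [bcf_le_iff]; intro x; simpa using hg1 x
      obtain ⟨T₁, hT₁⟩ : ∃ T : (S →ᵇ ℝ) →L[ℝ] ℝ,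
          T = (μ g)⁻¹ • (μ.comp (ContinuousLinearMap.mul ℝ (S →ᵇ ℝ) g)) := ⟨_, rfl⟩
      obtain ⟨T₂, hT₂⟩ : ∃ T : (S →ᵇ ℝ) →L[ℝ] ℝ,
          T = (1 - μ g)⁻¹ • (μ.comp (ContinuousLinearMap.mul ℝ (S →ᵇ ℝ) (1 - g))) := ⟨_, rfl⟩
      have hT₁app : ∀ h : S →ᵇ ℝ, T₁ h = (μ g)⁻¹ * μ (g * h) := by
        intro h
        rw [hT₁, ContinuousLinearMap.smul_apply, ContinuousLinearMap.comp_apply,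
          ContinuousLinearMap.mul_apply', smul_eq_mul]
      have hT₂app : ∀ h : S →ᵇ ℝ, T₂ h = (1 - μ g)⁻¹ * μ ((1 - g) * h) := by
        intro h
        rw [hT₂, ContinuousLinearMap.smul_apply, ContinuousLinearMap.comp_apply,
          ContinuousLinearMap.mul_apply', smul_eq_mul]
      have hsplit : ∀ h : S →ᵇ ℝ, μ (g * h) + μ ((1 - g) * h) = μ h := by
        intro h
        rw [sub_mul, one_mul, map_sub]; ring
      have hpos₁ : ∀ h : S →ᵇ ℝ, 0 ≤ h → 0 ≤ T₁ h := by
        intro h hh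
        rw [hT₁app]
        refine mul_nonneg (inv_nonneg.2 hμg0) (hp _ ?_)
        rw [bcf_le_iff]; intro x
        simpa using mul_nonneg (hg0 x) (hh x)
      have hpos₂ : ∀ h : S →ᵇ ℝ, 0 ≤ h → 0 ≤ T₂ h := by
        intro h hh
        rw [hT₂app]
        refine mul_nonneg (inv_nonneg.2 ha1pos.le) (hp _ ?_)
        rw [bcf_le_iff]; intro x
        simpa using mul_nonneg (hg1x x) (hh x)
      have hmem₁ : T₁ ∈ Ma1S S := by
        refine ⟨?_, hpos₁⟩
        rw [pos_norm T₁ hpos₁, hT₁app, mul_one, inv_mul_cancel₀ ha0]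
      have hmem₂ : T₂ ∈ Ma1S S := by
        refine ⟨?_, hpos₂⟩
        have e : μ ((1 - g) * 1) = 1 - μ g := by rw [mul_one, map_sub, h1]
        rw [pos_norm T₂ hpos₂, hT₂app, e, inv_mul_cancel₀ ha1]
      have hsum : μ g • T₁ + (1 - μ g) • T₂ = μ := by
        ext h
        rw [ContinuousLinearMap.add_apply, ContinuousLinearMap.smul_apply,
          ContinuousLinearMap.smul_apply, hT₁app, hT₂app, smul_eq_mul, smul_eq_mul,
          mul_inv_cancel_left₀ ha0, mul_inv_cancel_left₀ ha1]
        exact hsplit h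
      have hseg : μ ∈ openSegment ℝ T₁ T₂ := ⟨μ g, 1 - μ g, h0, ha1pos, by ring, hsum⟩
      have hTeq := (hext.2 T₁ hmem₁ T₂ hmem₂ hseg).1
      have happ : T₁ f = μ f := by rw [hTeq]
      rw [hT₁app] at happ
      field_simp at happ
      rw [happ]
  -- general case
  intro f₁ f₂
  by_cases hz : f₁ = 0
  · simp [hz]
  have hc : 0 < ‖f₁‖ := norm_pos_iff.2 hz
  have hbound : ∀ x, |f₁ x| ≤ ‖f₁‖ := fun x => by
    simpa [Real.norm_eq_abs] using f₁.norm_coe_le_norm x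
  obtain ⟨g, hgdef⟩ : ∃ g : S →ᵇ ℝ, g = (2 * ‖f₁‖)⁻¹ • (f₁ + ‖f₁‖ • 1) := ⟨_, rfl⟩
  have h2c : (0 : ℝ) < 2 * ‖f₁‖ := by linarith
  have hg0 : (0 : S →ᵇ ℝ) ≤ g := by
    rw [hgdef, bcf_le_iff]; intro x
    have := (abs_le.1 (hbound x)).1
    simp only [coe_smul, Pi.smul_apply, coe_add, Pi.add_apply, coe_one, Pi.one_apply,
      smul_eq_mul, mul_one, coe_zero, Pi.zero_apply]
    have : (0:ℝ) ≤ f₁ x + ‖f₁‖ := by linarith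
    positivity
  have hg1 : g ≤ 1 := by
    rw [hgdef, bcf_le_iff]; intro x
    have hx2 := (abs_le.1 (hbound x)).2
    simp only [coe_smul, Pi.smul_apply, coe_add, Pi.add_apply, coe_one, Pi.one_apply,
      smul_eq_mul, mul_one]
    rw [inv_mul_le_iff₀ h2c]
    linarith
  have key := claim g hg0 hg1 f₂
  have hgf : f₁ * f₂ = (2 * ‖f₁‖) • (g * f₂) - ‖f₁‖ • f₂ := by
    rw [hgdef]
    ext x
    simp only [coe_sub, Pi.sub_apply, coe_mul, Pi.mul_apply, coe_smul, Pi.smul_apply,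
      coe_add, Pi.add_apply, coe_one, Pi.one_apply, smul_eq_mul, mul_one]
    field_simp
    ring
  have hf₁ : μ f₁ = (2 * ‖f₁‖) * μ g - ‖f₁‖ := by
    have e : f₁ = (2 * ‖f₁‖) • g - ‖f₁‖ • 1 := by
      rw [hgdef]
      ext x
      simp only [coe_sub, Pi.sub_apply, coe_smul, Pi.smul_apply, coe_add, Pi.add_apply,
        coe_one, Pi.one_apply, smul_eq_mul, mul_one]
      field_simp
      ring
    calc μ f₁ = μ ((2 * ‖f₁‖) • g - ‖f₁‖ • 1) := by rw [← e]
      _ = (2 * ‖f₁‖) * μ g - ‖f₁‖ * μ 1 := by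
          rw [map_sub, map_smul, map_smul, smul_eq_mul, smul_eq_mul]
      _ = (2 * ‖f₁‖) * μ g - ‖f₁‖ := by rw [h1, mul_one]
  rw [hgf, map_sub, map_smul, map_smul, key, hf₁, smul_eq_mul, smul_eq_mul]
  ring

end main2

/-- For `μ ∈ M^a_1(S)`, `S` an arbitrary topological space, the
following are equivalent: (i) `μ` is an extreme point of `M^a_1(S)`;
(iv) `μ` is a lattice homomorphism (`|μ(f)| = μ(|f|)`);
(v) `μ` is an algebra homomorphism (`μ(f₁f₂) = μ(f₁)μ(f₂)`). -/
theorem statement12 {S : Type*} [TopologicalSpace S]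
    (μ : (S →ᵇ ℝ) →L[ℝ] ℝ) (hμ : μ ∈ Ma1S S) :
    (μ ∈ Set.extremePoints ℝ (Ma1S S) ↔ ∀ f : S →ᵇ ℝ, |μ f| = μ |f|) ∧
    (μ ∈ Set.extremePoints ℝ (Ma1S S) ↔
      ∀ f₁ f₂ : S →ᵇ ℝ, μ (f₁ * f₂) = μ f₁ * μ f₂) := by
  by_cases hS : Nonempty S
  · have h1 : μ 1 = 1 := by rw [← pos_norm μ hμ.2]; exact hμ.1
    have EM : μ ∈ Set.extremePoints ℝ (Ma1S S) →
        ∀ f₁ f₂ : S →ᵇ ℝ, μ (f₁ * f₂) = μ f₁ * μ f₂ := extreme_to_mult μ hμ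
    have ME : (∀ f₁ f₂ : S →ᵇ ℝ, μ (f₁ * f₂) = μ f₁ * μ f₂) →
        μ ∈ Set.extremePoints ℝ (Ma1S S) := mult_to_extreme μ hμ
    refine ⟨⟨fun h => mult_to_lattice μ hμ.2 (EM h), fun h => ME (lattice_to_mult μ hμ.2 h1 h)⟩,
      ⟨EM, ME⟩⟩
  · exfalso
    have : IsEmpty S := not_nonempty_iff.mp hS
    have hμ0 : μ = 0 := by
      ext f
      have : f = 0 := by ext x; exact absurd (Nonempty.intro x) hS
      rw [this, map_zero, ContinuousLinearMap.zero_apply]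
    rw [hμ0] at hμ
    have h := hμ.1
    rw [ContinuousLinearMap.opNorm_zero] at h
    exact zero_ne_one h
end
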